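/- Let S be a finite set, a, b : S → ℝ with a(s) > 0 for all s, and τ > 1. The minimizer q of the function q ↦ KL(q‖p) + (τ−1)·KL(q‖μ) over probability distributions q on S, where p and μ are fixed probability distributions with full support, satisfies q(s) ∝ μ(s)^{1−1/τ} · p(s)^{1/τ}. -/
import Mathlib

/-- Gibbs' inequality: `0 ≤ ∑ q log(q/r)` for prob. vectors `q, r` with `r > 0`. -/
lemma gibbs_ineq {S : Type*} [Fintype S] (q r : S → ℝ)
    (hq0 : ∀ s, 0 ≤ q s) (hr0 : ∀ s, 0 < r s)
    (hq1 : ∑ s, q s = 1) (hr1 : ∑ s, r s = 1) :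
    0 ≤ ∑ s, q s * Real.log (q s / r s) := by
  have key : ∀ s, q s * Real.log (r s / q s) ≤ r s - q s := by
    intro s
    rcases eq_or_lt_of_le (hq0 s) with h | h
    · simp [← h, (hr0 s).le]
    · have hx : 0 < r s / q s := div_pos (hr0 s) h
      have := Real.log_le_sub_one_of_pos hx
      have h2 : q s * Real.log (r s / q s) ≤ q s * (r s / q s - 1) := by
        exact mul_le_mul_of_nonneg_left this h.le
      calc q s * Real.log (r s / q s) ≤ q s * (r s / q s - 1) := h2
        _ = r s - q s := by field_simp
  have hsum : ∑ s, q s * Real.log (r s / q s) ≤ 0 := by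
    calc ∑ s, q s * Real.log (r s / q s) ≤ ∑ s, (r s - q s) :=
          Finset.sum_le_sum fun s _ => key s
      _ = 0 := by rw [Finset.sum_sub_distrib, hq1, hr1]; ring
  have heq : ∑ s, q s * Real.log (q s / r s) = -∑ s, q s * Real.log (r s / q s) := by
    rw [← Finset.sum_neg_distrib]
    refine Finset.sum_congr rfl fun s _ => ?_
    rcases eq_or_lt_of_le (hq0 s) with h | h
    · simp [← h]
    · rw [Real.log_div (ne_of_gt h) (ne_of_gt (hr0 s)),
        Real.log_div (ne_of_gt (hr0 s)) (ne_of_gt h)]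
      ring
  linarith

/-- The distribution `q*(s) ∝ μ(s)^{1−1/τ} p(s)^{1/τ}` minimizes
`q ↦ KL(q‖p) + (τ−1)·KL(q‖μ)` over probability distributions `q` on a finite set. -/
theorem kl_mixture_minimizer
    {S : Type*} [Fintype S] [Nonempty S] (p μ : S → ℝ) (τ : ℝ) (hτ : 1 < τ)
    (hp0 : ∀ s, 0 < p s) (hμ0 : ∀ s, 0 < μ s)
    (hp1 : ∑ s, p s = 1) (hμ1 : ∑ s, μ s = 1)
    (Z : ℝ) (hZ : Z = ∑ s, (μ s) ^ (1 - 1/τ) * (p s) ^ (1/τ))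
    (qstar : S → ℝ) (hqs : ∀ s, qstar s = (μ s) ^ (1 - 1/τ) * (p s) ^ (1/τ) / Z)
    (q : S → ℝ) (hq0 : ∀ s, 0 ≤ q s) (hq1 : ∑ s, q s = 1) :
    (∑ s, qstar s * Real.log (qstar s / p s))
      + (τ - 1) * ∑ s, qstar s * Real.log (qstar s / μ s)
    ≤ (∑ s, q s * Real.log (q s / p s))
      + (τ - 1) * ∑ s, q s * Real.log (q s / μ s) := by
  have hτ0 : (0:ℝ) < τ := lt_trans one_pos hτ
  have hτne : τ ≠ 0 := ne_of_gt hτ0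
  have hm0 : ∀ s, 0 < (μ s) ^ (1 - 1/τ) * (p s) ^ (1/τ) := fun s =>
    mul_pos (Real.rpow_pos_of_pos (hμ0 s) _) (Real.rpow_pos_of_pos (hp0 s) _)
  have hZ0 : 0 < Z := by
    rw [hZ]; exact Finset.sum_pos (fun s _ => hm0 s) Finset.univ_nonempty
  have hqs0 : ∀ s, 0 < qstar s := fun s => by
    rw [hqs]; exact div_pos (hm0 s) hZ0
  have hqs1 : ∑ s, qstar s = 1 := by
    have : ∑ s, qstar s = (∑ s, (μ s) ^ (1 - 1/τ) * (p s) ^ (1/τ)) / Z := by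
      rw [Finset.sum_div]; exact Finset.sum_congr rfl fun s _ => hqs s
    rw [this, ← hZ, div_self (ne_of_gt hZ0)]
  -- log of qstar
  have hlogqs : ∀ s, Real.log (qstar s) =
      (1 - 1/τ) * Real.log (μ s) + (1/τ) * Real.log (p s) - Real.log Z := by
    intro s
    rw [hqs, Real.log_div (ne_of_gt (hm0 s)) (ne_of_gt hZ0),
      Real.log_mul (ne_of_gt (Real.rpow_pos_of_pos (hμ0 s) _))
        (ne_of_gt (Real.rpow_pos_of_pos (hp0 s) _)),
      Real.log_rpow (hμ0 s), Real.log_rpow (hp0 s)]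
  -- key pointwise identity for any nonneg vector
  have key : ∀ (r : S → ℝ), (∀ s, 0 ≤ r s) → ∀ s,
      r s * Real.log (r s / p s) + (τ - 1) * (r s * Real.log (r s / μ s))
      = τ * (r s * Real.log (r s / qstar s)) - τ * Real.log Z * r s := by
    intro r hr0 s
    rcases eq_or_lt_of_le (hr0 s) with h | h
    · simp [← h]
    · rw [Real.log_div (ne_of_gt h) (ne_of_gt (hp0 s)),
        Real.log_div (ne_of_gt h) (ne_of_gt (hμ0 s)),
        Real.log_div (ne_of_gt h) (ne_of_gt (hqs0 s)), hlogqs s]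
      field_simp
      ring
  -- rewrite both sides
  have rewr : ∀ (r : S → ℝ), (∀ s, 0 ≤ r s) → (∑ s, r s = 1) →
      (∑ s, r s * Real.log (r s / p s)) + (τ - 1) * ∑ s, r s * Real.log (r s / μ s)
      = τ * (∑ s, r s * Real.log (r s / qstar s)) - τ * Real.log Z := by
    intro r hr0 hr1
    rw [Finset.mul_sum, Finset.mul_sum, ← Finset.sum_add_distrib]
    have : ∑ s, (r s * Real.log (r s / p s) + (τ - 1) * (r s * Real.log (r s / μ s)))
        = ∑ s, (τ * (r s * Real.log (r s / qstar s)) - τ * Real.log Z * r s) :=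
      Finset.sum_congr rfl fun s _ => key r hr0 s
    rw [this, Finset.sum_sub_distrib,
      show ∑ x, τ * Real.log Z * r x = τ * Real.log Z * ∑ x, r x from
        (Finset.mul_sum _ _ _).symm, hr1, mul_one]
  rw [rewr q hq0 hq1, rewr qstar (fun s => (hqs0 s).le) hqs1]
  have hD : 0 ≤ ∑ s, q s * Real.log (q s / qstar s) :=
    gibbs_ineq q qstar hq0 hqs0 hq1 hqs1
  have hzero : ∑ s, qstar s * Real.log (qstar s / qstar s) = 0 := by
    refine Finset.sum_eq_zero fun s _ => ?_
    rw [div_self (ne_of_gt (hqs0 s)), Real.log_one, mul_zero]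
  rw [hzero]
  nlinarith
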